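/- Let C assign a rational number C(m; d) to each pair of a finite tuple m of positive integers and an integer d ≥ 1, with C(m; d) = 0 whenever m₁+⋯+m_l ≠ 4d + l. Then there is at most one F, assigning a rational number F(m; d) to each such pair (with m possibly empty), such that: F is symmetric in the entries of m; F satisfies the divisor relation F((1)⌢m; d) = d·F(m; d); F(m; d) = 0 whenever some entry of m is ≥ 4; F(m; d) = 0 whenever d ≡ k_d(m) (mod 2); F(m; d) = 0 whenever k_d(m) < 0; F((3); 1) = −1; F satisfies recursions (R1) and (R2) with complex input C at all admissible (d,m); and, for every d ≥ 2, F((); d) = (1/(d+1)) Σ_{d₁,d₂ ≥ 1, d₁+d₂=d} [ d₂ C(2d−1, 2d₁) F((3); d₁+1) F((); d₂) + ((2d₂−d₁−1)/(2d₂−1)) C(2d−2, 2d₁) ( F((2,2); d₁+1) F((); d₂) − F((2); d₁+1) F((2); d₂) ) ]. That is, any two such F agree everywhere. -/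

import Mathlib

open Finset

/-- Binomial coefficient `C(n,k)` as a rational number, with the convention that
`C(n,k) = 0` whenever `k < 0` or `k > n`. -/
def binom (n k : ℤ) : ℚ :=
  if 0 ≤ k ∧ k ≤ n then (n.toNat.choose k.toNat : ℚ) else 0

/-- Pairs `(d₀, d')` of positive integers with `d₀ + 2d' = d`. -/
def pairsHalf (d : ℕ) : Finset (ℕ × ℕ) :=
  (Finset.range (d + 1) ×ˢ Finset.range (d + 1)).filter
    fun p => 1 ≤ p.1 ∧ 1 ≤ p.2 ∧ p.1 + 2 * p.2 = d

/-- Pairs `(d₁, d₂)` of positive integers with `d₁ + d₂ = d`. -/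
def pairsSum (d : ℕ) : Finset (ℕ × ℕ) :=
  (Finset.HasAntidiagonal.antidiagonal d).filter fun p => 1 ≤ p.1 ∧ 1 ≤ p.2

/-- The subtuple of a tuple `m` indexed (in increasing order) by a set `S`
of positions. -/
def subt {α : Type*} (m : List α) (S : Finset (Fin m.length)) : List α :=
  (S.sort (· ≤ ·)).map m.get

/-- All entries of the tuple `m` are positive integers. -/
def posl (m : List ℕ) : Prop := ∀ x ∈ m, 0 < x

/-- For a degree `d` and a tuple `m = (m₁,…,m_l)`, the number
`k_d(m) = 2d + l − (m₁ + ⋯ + m_l)`. -/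
def kd (d : ℕ) (m : List ℕ) : ℤ :=
  2 * (d : ℤ) + m.length - (m.sum : ℤ)

/-- The term `T₀ = −2^{l−2} d C(m⌢(3); d/2)` if `d` is even and `k_d(m) = 2`,
and `0` otherwise; the power `2^{l−2}` is taken in `ℚ`. -/
def TP3 (C : List ℕ → ℕ → ℚ) (d : ℕ) (m : List ℕ) : ℚ :=
  if Even d ∧ kd d m = 2 then
    -((2 : ℚ) ^ ((m.length : ℤ) - 2)) * (d : ℚ) * C (m ++ [3]) (d / 2)
  else 0

/-- The WDVV-type recursion (R1) for the real invariants of `(ℙ³,τ₃)` at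
`(d, m)` with `m = x :: t`:  the sums over `(I,J) ∈ P(l)` are encoded by the
subsets `S` of the positions of `t` that are placed in `I` (so `m_I = x :: t_S`,
`m_J = t_{Sᶜ}` and `|I| = |S| + 1`). -/
def R1 (C F : List ℕ → ℕ → ℚ) (d : ℕ) (x : ℕ) (t : List ℕ) : Prop :=
  F ((x + 1) :: t) d =
    TP3 C d (x :: t)
    - ∑ p ∈ pairsHalf d, (p.2 : ℚ) *
        ∑ S : Finset (Fin t.length), (2 : ℚ) ^ S.card *
          ∑ i ∈ Finset.Icc 1 2,
            C ((x :: subt t S) ++ [i]) p.2 * F ((3 - i) :: subt t Sᶜ) p.1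
    + ∑ q ∈ pairsSum d,
        ∑ S : Finset (Fin t.length),
          ((q.2 : ℚ) * binom (kd d (x :: t) - 2) (kd q.1 (x :: subt t S) - 1)
            - (q.1 : ℚ) * binom (kd d (x :: t) - 2) (kd q.1 (x :: subt t S)))
          * F (x :: subt t S) q.1 * F (subt t Sᶜ) q.2

/-- The WDVV-type recursion (R2) for the real invariants of `(ℙ³,τ₃)` at
`(d, m)` with `m = x :: y :: t`: the sums over `(I,J) ∈ P_{;2}(l)` are encoded
by the subsets `S` of the positions of `t` placed in `I` (so `m_I = x :: t_S`,
`m_J = y :: t_{Sᶜ}`, `|I| = |S| + 1` and `|J| = |Sᶜ| + 1`). -/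
def R2 (C F : List ℕ → ℕ → ℚ) (d : ℕ) (x y : ℕ) (t : List ℕ) : Prop :=
  F (x :: (y + 1) :: t) d =
    F ((x + 1) :: y :: t) d
    + ∑ p ∈ pairsHalf d, (p.2 : ℚ) *
        ∑ S : Finset (Fin t.length),
          ∑ i ∈ Finset.Icc 1 2,
            ((2 : ℚ) ^ S.card * C ((x :: subt t S) ++ [i]) p.2
                * F ((3 - i) :: y :: subt t Sᶜ) p.1
              - (2 : ℚ) ^ (Sᶜ : Finset (Fin t.length)).card
                * C ((y :: subt t Sᶜ) ++ [3 - i]) p.2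
                * F (i :: x :: subt t S) p.1)
    + ∑ q ∈ pairsSum d,
        ∑ S : Finset (Fin t.length),
          ((q.1 : ℚ) * binom (kd d (x :: y :: t) - 1) (kd q.1 (x :: subt t S))
            - (q.2 : ℚ) * binom (kd d (x :: y :: t) - 1) (kd q.2 (y :: subt t Sᶜ)))
          * F (x :: subt t S) q.1 * F (y :: subt t Sᶜ) q.2

/-- The full set of conditions on the real genus 0 invariants `F(m; d)` of
`(ℙ³,τ₃)`: symmetry, the divisor relation, the various vanishing statements, the
input `F([3]; 1) = −1`, the recursions (R1) and (R2), and the formula for the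
purely real point-counting invariants `F([]; d)`. -/
def GoodP3 (C F : List ℕ → ℕ → ℚ) : Prop :=
  (∀ d : ℕ, 1 ≤ d → ∀ m m' : List ℕ, posl m → m.Perm m' → F m d = F m' d)
    ∧ (∀ d : ℕ, 1 ≤ d → ∀ m : List ℕ, posl m → F (1 :: m) d = (d : ℚ) * F m d)
    ∧ (∀ d : ℕ, 1 ≤ d → ∀ m : List ℕ, posl m → (∃ x ∈ m, 4 ≤ x) → F m d = 0)
    ∧ (∀ d : ℕ, 1 ≤ d → ∀ m : List ℕ, posl m →
        (d : ℤ) % 2 = kd d m % 2 → F m d = 0)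
    ∧ (∀ d : ℕ, 1 ≤ d → ∀ m : List ℕ, posl m → kd d m < 0 → F m d = 0)
    ∧ F [3] 1 = -1
    ∧ (∀ d : ℕ, 1 ≤ d → ∀ (x : ℕ) (t : List ℕ), posl (x :: t) →
        2 ≤ kd d (x :: t) → R1 C F d x t)
    ∧ (∀ d : ℕ, 1 ≤ d → ∀ (x y : ℕ) (t : List ℕ), posl (x :: y :: t) →
        1 ≤ kd d (x :: y :: t) → R2 C F d x y t)
    ∧ (∀ d : ℕ, 2 ≤ d →
        F [] d = (1 / ((d : ℚ) + 1)) *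
          ∑ q ∈ pairsSum d,
            ((q.2 : ℚ) * binom (2 * (d : ℤ) - 1) (2 * (q.1 : ℤ))
                * F [3] (q.1 + 1) * F [] q.2
              + ((2 * (q.2 : ℚ) - (q.1 : ℚ) - 1) / (2 * (q.2 : ℚ) - 1))
                * binom (2 * (d : ℤ) - 2) (2 * (q.1 : ℤ))
                * (F [2, 2] (q.1 + 1) * F [] q.2 - F [2] (q.1 + 1) * F [2] q.2)))

lemma mem_pairsHalf {d : ℕ} {p : ℕ × ℕ} (hp : p ∈ pairsHalf d) :
    1 ≤ p.1 ∧ 1 ≤ p.2 ∧ p.1 + 2 * p.2 = d := by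
  simp only [pairsHalf, Finset.mem_filter] at hp; exact hp.2
lemma mem_pairsSum {d : ℕ} {q : ℕ × ℕ} (hq : q ∈ pairsSum d) :
    1 ≤ q.1 ∧ 1 ≤ q.2 ∧ q.1 + q.2 = d := by
  simp only [pairsSum, Finset.mem_filter, Finset.HasAntidiagonal.mem_antidiagonal] at hq
  exact ⟨hq.2.1, hq.2.2, hq.1⟩
lemma posl_subt {m : List ℕ} (h : posl m) (S : Finset (Fin m.length)) : posl (subt m S) := by
  intro x hx
  simp only [subt, List.mem_map] at hx
  obtain ⟨i, _, rfl⟩ := hx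
  exact h _ (List.get_mem m i)
lemma posl_cons {a : ℕ} {l : List ℕ} (ha : 0 < a) (hl : posl l) : posl (a :: l) := by
  intro x hx
  rcases List.mem_cons.1 hx with rfl | h
  · exact ha
  · exact hl x h
lemma posl_of_cons {a : ℕ} {l : List ℕ} (h : posl (a :: l)) : posl l :=
  fun x hx => h x (List.mem_cons_of_mem _ hx)

lemma key_R1 {C F F' : List ℕ → ℕ → ℚ}
    (hR1 : ∀ d : ℕ, 1 ≤ d → ∀ (x : ℕ) (t : List ℕ), posl (x :: t) → 2 ≤ kd d (x :: t) → R1 C F d x t)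
    (hR1' : ∀ d : ℕ, 1 ≤ d → ∀ (x : ℕ) (t : List ℕ), posl (x :: t) → 2 ≤ kd d (x :: t) → R1 C F' d x t)
    {d : ℕ} (hd : 1 ≤ d)
    (IH : ∀ e, e < d → 1 ≤ e → ∀ m : List ℕ, posl m → F m e = F' m e)
    {x : ℕ} {t : List ℕ} (hpos : posl (x :: t)) (hk : 2 ≤ kd d (x :: t)) :
    F ((x + 1) :: t) d = F' ((x + 1) :: t) d := by
  have h1 := hR1 d hd x t hpos hk
  have h2 := hR1' d hd x t hpos hk
  unfold R1 at h1 h2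
  rw [h1, h2]
  have hx : 0 < x := hpos x (List.mem_cons_self)
  have ht : posl t := posl_of_cons hpos
  congr 1
  · congr 1
    apply Finset.sum_congr rfl
    intro p hp
    obtain ⟨hp1, hp2, hpd⟩ := mem_pairsHalf hp
    congr 1
    apply Finset.sum_congr rfl
    intro S _
    congr 1
    apply Finset.sum_congr rfl
    intro i hi
    rw [IH p.1 (by omega) hp1 _ (posl_cons (by simp only [Finset.mem_Icc] at hi; omega)
      (posl_subt ht Sᶜ))]
  · apply Finset.sum_congr rfl
    intro q hq
    obtain ⟨hq1, hq2, hqd⟩ := mem_pairsSum hq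
    apply Finset.sum_congr rfl
    intro S _
    rw [IH q.1 (by omega) hq1 _ (posl_cons hx (posl_subt ht S)),
        IH q.2 (by omega) hq2 _ (posl_subt ht Sᶜ)]

lemma key_R2 {C F F' : List ℕ → ℕ → ℚ}
    (hR2 : ∀ d : ℕ, 1 ≤ d → ∀ (x y : ℕ) (t : List ℕ), posl (x :: y :: t) →
      1 ≤ kd d (x :: y :: t) → R2 C F d x y t)
    (hR2' : ∀ d : ℕ, 1 ≤ d → ∀ (x y : ℕ) (t : List ℕ), posl (x :: y :: t) →
      1 ≤ kd d (x :: y :: t) → R2 C F' d x y t)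
    {d : ℕ} (hd : 1 ≤ d)
    (IH : ∀ e, e < d → 1 ≤ e → ∀ m : List ℕ, posl m → F m e = F' m e)
    {x y : ℕ} {t : List ℕ} (hpos : posl (x :: y :: t)) (hk : 1 ≤ kd d (x :: y :: t))
    (hshift : F ((x + 1) :: y :: t) d = F' ((x + 1) :: y :: t) d) :
    F (x :: (y + 1) :: t) d = F' (x :: (y + 1) :: t) d := by
  have h1 := hR2 d hd x y t hpos hk
  have h2 := hR2' d hd x y t hpos hk
  unfold R2 at h1 h2
  rw [h1, h2, hshift]
  have hx : 0 < x := hpos x (List.mem_cons_self)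
  have hy : 0 < y := hpos y (by simp)
  have ht : posl t := posl_of_cons (posl_of_cons hpos)
  congr 1
  · congr 1
    apply Finset.sum_congr rfl
    intro p hp
    obtain ⟨hp1, hp2, hpd⟩ := mem_pairsHalf hp
    congr 1
    apply Finset.sum_congr rfl
    intro S _
    apply Finset.sum_congr rfl
    intro i hi
    have hi' : 1 ≤ i ∧ i ≤ 2 := Finset.mem_Icc.1 hi
    rw [IH p.1 (by omega) hp1 _ (posl_cons (by omega) (posl_cons hy (posl_subt ht Sᶜ))),
        IH p.1 (by omega) hp1 _ (posl_cons (by omega) (posl_cons hx (posl_subt ht S)))]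
  · apply Finset.sum_congr rfl
    intro q hq
    obtain ⟨hq1, hq2, hqd⟩ := mem_pairsSum hq
    apply Finset.sum_congr rfl
    intro S _
    rw [IH q.1 (by omega) hq1 _ (posl_cons hx (posl_subt ht S)),
        IH q.2 (by omega) hq2 _ (posl_cons hy (posl_subt ht Sᶜ))]

lemma subt_nil (S : Finset (Fin (List.length ([] : List ℕ)))) : subt ([] : List ℕ) S = [] := by
  haveI : IsEmpty (Fin (List.length ([] : List ℕ))) := ⟨fun i => absurd i.2 (by simp)⟩
  have : S = ∅ := Finset.eq_empty_of_isEmpty S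
  subst this
  simp [subt]

lemma d1_empty {C F : List ℕ → ℕ → ℚ}
    (hR1 : ∀ d : ℕ, 1 ≤ d → ∀ (x : ℕ) (t : List ℕ), posl (x :: t) → 2 ≤ kd d (x :: t) → R1 C F d x t)
    (h4 : ∀ d : ℕ, 1 ≤ d → ∀ m : List ℕ, posl m → (∃ x ∈ m, 4 ≤ x) → F m d = 0)
    (h31 : F [3] 1 = -1) :
    F [] 1 = - TP3 C 2 [3] := by
  have hpos : posl [3] := by intro z hz; simp at hz; omega
  have h := hR1 2 (by norm_num) 3 [] hpos (by norm_num [kd])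
  unfold R1 at h
  have hF4 : F [4] 2 = 0 := h4 2 (by norm_num) [4] (by intro z hz; simp at hz; omega)
    ⟨4, by simp⟩
  have hPH : pairsHalf 2 = ∅ := by decide
  have hPS : pairsSum 2 = {(1, 1)} := by
    ext ⟨a, b⟩
    simp only [pairsSum, Finset.mem_filter, Finset.HasAntidiagonal.mem_antidiagonal,
      Finset.mem_singleton, Prod.mk.injEq]
    constructor <;> intro h <;> omega
  haveI : IsEmpty (Fin (List.length ([] : List ℕ))) := ⟨fun i => absurd i.2 (by simp)⟩
  rw [hF4, hPH, hPS] at h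
  simp only [Finset.sum_empty, Finset.sum_singleton, Finset.univ_unique, subt_nil] at h
  norm_num [binom, kd, h31] at h
  linarith


lemma count23 (m : List ℕ) (h : ∀ x ∈ m, x = 2 ∨ x = 3) :
    m.sum = 2 * m.count 2 + 3 * m.count 3 ∧ m.length = m.count 2 + m.count 3 := by
  induction m with
  | nil => simp
  | cons a t ih =>
    have ht := ih (fun x hx => h x (List.mem_cons_of_mem a hx))
    rcases h a (List.mem_cons_self) with rfl | rfl <;>
      simp [List.count_cons, ht.1, ht.2] <;> omega

/-- There is at most one function `F` on pairs of a tuple of positive integers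
and a positive degree satisfying all the conditions of `GoodP3`. -/
theorem stmt_16 (C F F' : List ℕ → ℕ → ℚ)
    (hC : ∀ d : ℕ, 1 ≤ d → ∀ m : List ℕ, posl m →
      m.sum ≠ 4 * d + m.length → C m d = 0)
    (hF : GoodP3 C F) (hF' : GoodP3 C F') :
    ∀ d : ℕ, 1 ≤ d → ∀ m : List ℕ, posl m → F m d = F' m d := by
  obtain ⟨hsym, hdiv, h4, hpar, hneg, h31, hR1, hR2, hemp⟩ := hF
  obtain ⟨hsym', hdiv', h4', hpar', hneg', h31', hR1', hR2', hemp'⟩ := hF'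
  intro d
  induction d using Nat.strong_induction_on with
  | _ d IHd =>
  intro hd1
  have IH : ∀ e, e < d → 1 ≤ e → ∀ m : List ℕ, posl m → F m e = F' m e := by
    intro e he h1e
    exact IHd e he h1e
  have hposnil : posl [] := by intro z hz; simp at hz
  have hpos3 : posl [3] := by intro z hz; simp at hz; omega
  have hEmpty : F [] d = F' [] d := by
    rcases Nat.lt_or_ge d 2 with hd2 | hd2
    · have hd : d = 1 := by omega
      subst hd
      rw [d1_empty hR1 h4 h31, d1_empty hR1' h4' h31']
    · have h3e : ∀ e, 1 ≤ e → e ≤ d → F [3] e = F' [3] e := by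
        intro e he hed
        rcases eq_or_lt_of_le hed with rfl | hlt
        · exact key_R1 (x := 2) (t := []) hR1 hR1' he IH
            (by intro z hz; simp at hz; omega) (by simp [kd]; omega)
        · exact IH e hlt he [3] hpos3
      have h22e : ∀ e, 1 ≤ e → e ≤ d → F [2, 2] e = F' [2, 2] e := by
        intro e he hed
        rcases eq_or_lt_of_le hed with rfl | hlt
        · exact key_R1 (x := 1) (t := [2]) hR1 hR1' he IH
            (by intro z hz; simp at hz; omega) (by simp [kd]; omega)
        · exact IH e hlt he [2, 2] (by intro z hz; simp at hz; omega)
      have h2e : ∀ e, 1 ≤ e → e ≤ d → F [2] e = F' [2] e := by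
        intro e he hed
        rcases eq_or_lt_of_le hed with rfl | hlt
        · exact key_R1 (x := 1) (t := []) hR1 hR1' he IH
            (by intro z hz; simp at hz; omega) (by simp [kd]; omega)
        · exact IH e hlt he [2] (by intro z hz; simp at hz; omega)
      rw [hemp d hd2, hemp' d hd2]
      congr 1
      apply Finset.sum_congr rfl
      intro q hq
      obtain ⟨hq1, hq2, hqd⟩ := mem_pairsSum hq
      rw [h3e (q.1 + 1) (by omega) (by omega), h22e (q.1 + 1) (by omega) (by omega),
          h2e (q.1 + 1) (by omega) (by omega), h2e q.2 hq2 (by omega),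
          IH q.2 (by omega) hq2 [] hposnil]
  suffices H : ∀ n (m : List ℕ), m.length ≤ n → posl m → F m d = F' m d by
    intro m hm
    exact H m.length m le_rfl hm
  intro n
  induction n with
  | zero =>
    intro m hm _
    have hmn : m = [] := List.length_eq_zero_iff.mp (Nat.le_zero.mp hm)
    subst hmn
    exact hEmpty
  | succ n IHn =>
    intro m hlen hpos
    rcases eq_or_ne m [] with rfl | hne
    · exact hEmpty
    by_cases hbig : ∃ x ∈ m, 4 ≤ x
    · rw [h4 d hd1 m hpos hbig, h4' d hd1 m hpos hbig]
    by_cases hone : 1 ∈ m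
    · have hperm : m.Perm (1 :: m.erase 1) := List.perm_cons_erase hone
      have hpe : posl (m.erase 1) := fun z hz => hpos z (List.mem_of_mem_erase hz)
      have hlen' : (m.erase 1).length ≤ n := by
        rw [List.length_erase_of_mem hone]
        have : 1 ≤ m.length := List.length_pos_iff.mpr hne
        omega
      calc F m d = F (1 :: m.erase 1) d := hsym d hd1 m _ hpos hperm
        _ = (d : ℚ) * F (m.erase 1) d := hdiv d hd1 _ hpe
        _ = (d : ℚ) * F' (m.erase 1) d := by rw [IHn _ hlen' hpe]
        _ = F' (1 :: m.erase 1) d := (hdiv' d hd1 _ hpe).symm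
        _ = F' m d := (hsym' d hd1 m _ hpos hperm).symm
    have h23 : ∀ z ∈ m, z = 2 ∨ z = 3 := by
      intro z hz
      have h1z := hpos z hz
      have h4z : ¬ 4 ≤ z := fun h => hbig ⟨z, hz, h⟩
      have hz1 : z ≠ 1 := fun h => hone (h ▸ hz)
      omega
    rcases lt_trichotomy (kd d m) 0 with hkneg | hk0 | hkpos
    · rw [hneg d hd1 m hpos hkneg, hneg' d hd1 m hpos hkneg]
    · -- kd d m = 0
      obtain ⟨hsumeq, hleneq⟩ := count23 m h23
      have h2d : 2 * d = m.count 2 + 2 * m.count 3 := by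
        simp only [kd] at hk0
        omega
      by_cases hc2 : 2 ≤ m.count 2
      · -- at least two 2's
        have h2m : 2 ∈ m := by
          by_contra h
          rw [List.count_eq_zero_of_not_mem h] at hc2
          omega
        have h2m' : 2 ∈ m.erase 2 := by
          by_contra h
          have := (List.count_erase_self : List.count 2 (m.erase 2) = List.count 2 m - 1)
          rw [List.count_eq_zero_of_not_mem h] at this
          omega
        set t' := (m.erase 2).erase 2 with ht'
        have hp1 : m.Perm (2 :: m.erase 2) := List.perm_cons_erase h2m
        have hp2 : (m.erase 2).Perm (2 :: t') := List.perm_cons_erase h2m'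
        have hperm : m.Perm (2 :: 2 :: t') := hp1.trans (hp2.cons 2)
        have hpt' : posl t' :=
          fun z hz => hpos z (List.mem_of_mem_erase (List.mem_of_mem_erase hz))
        have hlen2 : m.length = t'.length + 2 := by
          have := hperm.length_eq
          simpa using this
        have hsum2 : m.sum = 4 + t'.sum := by
          have := hperm.sum_eq
          simp at this
          omega
        have h3t' : F (3 :: t') d = F' (3 :: t') d :=
          IHn (3 :: t') (by simp; omega) (posl_cons (by norm_num) hpt')
        have hshift : F (3 :: 1 :: t') d = F' (3 :: 1 :: t') d := by
          have e1 : F (3 :: 1 :: t') d = (d : ℚ) * F (3 :: t') d := by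
            rw [hsym d hd1 (3 :: 1 :: t') (1 :: 3 :: t')
                (posl_cons (by norm_num) (posl_cons (by norm_num) hpt'))
                (List.Perm.swap 1 3 t'),
              hdiv d hd1 (3 :: t') (posl_cons (by norm_num) hpt')]
          have e2 : F' (3 :: 1 :: t') d = (d : ℚ) * F' (3 :: t') d := by
            rw [hsym' d hd1 (3 :: 1 :: t') (1 :: 3 :: t')
                (posl_cons (by norm_num) (posl_cons (by norm_num) hpt'))
                (List.Perm.swap 1 3 t'),
              hdiv' d hd1 (3 :: t') (posl_cons (by norm_num) hpt')]
          rw [e1, e2, h3t']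
        have hk2 : 1 ≤ kd d (2 :: 1 :: t') := by
          simp only [kd, List.sum_cons, List.length_cons] at hk0 ⊢
          omega
        have h22 : F (2 :: 2 :: t') d = F' (2 :: 2 :: t') d := by
          have := key_R2 (x := 2) (y := 1) (t := t') hR2 hR2' hd1 IH
            (posl_cons (by norm_num) (posl_cons (by norm_num) hpt')) hk2 hshift
          exact this
        calc F m d = F (2 :: 2 :: t') d := hsym d hd1 m _ hpos hperm
          _ = F' (2 :: 2 :: t') d := h22
          _ = F' m d := (hsym' d hd1 m _ hpos hperm).symm
      · have hc20 : m.count 2 = 0 := by omega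
        by_cases hc3 : 2 ≤ m.count 3
        · -- at least two 3's
          have h3m : 3 ∈ m := by
            by_contra h
            rw [List.count_eq_zero_of_not_mem h] at hc3
            omega
          have h3m' : 3 ∈ m.erase 3 := by
            by_contra h
            have := (List.count_erase_self : List.count 3 (m.erase 3) = List.count 3 m - 1)
            rw [List.count_eq_zero_of_not_mem h] at this
            omega
          set t' := (m.erase 3).erase 3 with ht'
          have hp1 : m.Perm (3 :: m.erase 3) := List.perm_cons_erase h3m
          have hp2 : (m.erase 3).Perm (3 :: t') := List.perm_cons_erase h3m'
          have hperm : m.Perm (3 :: 3 :: t') := hp1.trans (hp2.cons 3)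
          have hpt' : posl t' :=
            fun z hz => hpos z (List.mem_of_mem_erase (List.mem_of_mem_erase hz))
          have hlen2 : m.length = t'.length + 2 := by
            have := hperm.length_eq
            simpa using this
          have hsum2 : m.sum = 6 + t'.sum := by
            have := hperm.sum_eq
            simp at this
            omega
          have hshift : F (4 :: 2 :: t') d = F' (4 :: 2 :: t') d := by
            have hposl4 : posl (4 :: 2 :: t') :=
              posl_cons (by norm_num) (posl_cons (by norm_num) hpt')
            rw [h4 d hd1 _ hposl4 ⟨4, by simp⟩, h4' d hd1 _ hposl4 ⟨4, by simp⟩]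
          have hk2 : 1 ≤ kd d (3 :: 2 :: t') := by
            simp only [kd, List.sum_cons, List.length_cons] at hk0 ⊢
            omega
          have h33 : F (3 :: 3 :: t') d = F' (3 :: 3 :: t') d := by
            have := key_R2 (x := 3) (y := 2) (t := t') hR2 hR2' hd1 IH
              (posl_cons (by norm_num) (posl_cons (by norm_num) hpt')) hk2 hshift
            exact this
          calc F m d = F (3 :: 3 :: t') d := hsym d hd1 m _ hpos hperm
            _ = F' (3 :: 3 :: t') d := h33
            _ = F' m d := (hsym' d hd1 m _ hpos hperm).symm
        · -- m = [3], d = 1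
          have hdone : d = 1 ∧ m.count 3 = 1 := by omega
          have hlen1 : m.length = 1 := by omega
          have hm3 : m = [3] := by
            rcases m with _ | ⟨a, t⟩
            · exact absurd rfl hne
            · rcases t with _ | ⟨b, s⟩
              · rcases h23 a (by simp) with rfl | rfl
                · exfalso
                  simp [List.count_cons] at hc20
                · rfl
              · simp at hlen1
          subst hm3
          rw [hdone.1, h31, h31']
    · -- kd d m ≥ 1
      rcases m with _ | ⟨c, t⟩
      · exact hEmpty
      have hc : 2 ≤ c := by
        rcases h23 c (by simp) with rfl | rfl <;> omega
      obtain ⟨x, rfl⟩ : ∃ x, c = x + 1 := ⟨c - 1, by omega⟩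
      apply key_R1 hR1 hR1' hd1 IH
      · exact posl_cons (by omega) (posl_of_cons hpos)
      · simp only [kd, List.sum_cons, List.length_cons] at hkpos ⊢
        omega
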